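/- Let $a,b,c,d \in \mathbb{C}$ with $c$ and $d$ linearly independent over $\mathbb{R}$ and $ad - bc = 0$. Let $A,B,C,D : \mathbb{Z}\times\mathbb{Z} \to \mathbb{C}$ be functions with $A(p,q)\to a$, $B(p,q)\to b$, $C(p,q)\to c$, $D(p,q)\to d$ as $|p|+|q| \to \infty$. Then $\frac{A(p,q)\,p + B(p,q)\,q}{C(p,q)\,p + D(p,q)\,q} \to \frac{a}{c}$ as $|p|+|q| \to \infty$, where $(p,q)$ ranges over pairs with $(p,q)\neq(0,0)$; in particular $Cp+Dq \neq 0$ for all large $|p|+|q|$ and the limit also equals $b/d$ when $b,d\neq 0$. -/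

import Mathlib

open Complex

lemma qlim_lower (c d : ℂ)
    (hind : ∀ x y : ℝ, (x : ℂ) * c + (y : ℂ) * d = 0 → x = 0 ∧ y = 0) :
    ∃ m : ℝ, 0 < m ∧ ∀ x y : ℝ,
      m * (|x| + |y|) ≤ ‖(x : ℂ) * c + (y : ℂ) * d‖ := by
  have hc : c ≠ 0 := by
    intro h
    have := (hind 1 0 (by simp [h])).1
    norm_num at this
  have hd : d ≠ 0 := by
    intro h
    have := (hind 0 1 (by simp [h])).2
    norm_num at this
  set μ := |(c * (starRingEnd ℂ) d).im| with hμdef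
  have hμ : 0 < μ := by
    apply abs_pos.mpr
    intro h0
    -- c * conj d real ⇒ c is a real multiple of d
    have hr : c * (starRingEnd ℂ) d = ((c * (starRingEnd ℂ) d).re : ℂ) := by
      apply Complex.ext <;> simp [h0]
    have hnd : (Complex.normSq d : ℂ) ≠ 0 := by
      simpa using hd
    have hcd' : c = ((c * (starRingEnd ℂ) d).re : ℂ) * d / (Complex.normSq d : ℂ) := by
      rw [eq_div_iff hnd, ← Complex.mul_conj d, ← hr]
      ring
    have heq : (1 : ℂ) * c + ((-(c * (starRingEnd ℂ) d).re / Complex.normSq d : ℝ) : ℂ) * d = 0 := by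
      rw [one_mul, Complex.ofReal_div, Complex.ofReal_neg]
      linear_combination hcd'
    have := (hind 1 _ heq).1
    norm_num at this
  have hcd0 : 0 < ‖c‖ + ‖d‖ := by
    have := norm_pos_iff.mpr hc
    have := norm_pos_iff.mpr hd
    linarith
  refine ⟨μ / (‖c‖ + ‖d‖), div_pos hμ hcd0, fun x y => ?_⟩
  set z : ℂ := (x : ℂ) * c + (y : ℂ) * d with hz
  have h1 : |x| * μ ≤ ‖z‖ * ‖d‖ := by
    have him : (z * (starRingEnd ℂ) d).im = x * (c * (starRingEnd ℂ) d).im := by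
      have : z * (starRingEnd ℂ) d
          = (x : ℂ) * (c * (starRingEnd ℂ) d) + (y : ℂ) * (Complex.normSq d : ℂ) := by
        rw [hz, add_mul, mul_assoc, mul_assoc, Complex.mul_conj]
      rw [this]
      simp
    calc |x| * μ = |(z * (starRingEnd ℂ) d).im| := by rw [him, abs_mul]
      _ ≤ ‖z * (starRingEnd ℂ) d‖ := Complex.abs_im_le_norm _
      _ = ‖z‖ * ‖d‖ := by rw [norm_mul, Complex.norm_conj]
  have h2 : |y| * μ ≤ ‖z‖ * ‖c‖ := by
    have him : (z * (starRingEnd ℂ) c).im = - (y * (c * (starRingEnd ℂ) d).im) := by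
      have h3 : z * (starRingEnd ℂ) c
          = (x : ℂ) * (Complex.normSq c : ℂ) + (y : ℂ) * (d * (starRingEnd ℂ) c) := by
        rw [hz, add_mul, mul_assoc, mul_assoc, Complex.mul_conj]
      have h4 : (d * (starRingEnd ℂ) c).im = - (c * (starRingEnd ℂ) d).im := by
        have : d * (starRingEnd ℂ) c = (starRingEnd ℂ) (c * (starRingEnd ℂ) d) := by
          simp [map_mul, mul_comm]
        rw [this, Complex.conj_im]
      rw [h3]
      simp [h4]
      ring
    calc |y| * μ = |(z * (starRingEnd ℂ) c).im| := by rw [him, abs_neg, abs_mul]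
      _ ≤ ‖z * (starRingEnd ℂ) c‖ := Complex.abs_im_le_norm _
      _ = ‖z‖ * ‖c‖ := by rw [norm_mul, Complex.norm_conj]
  rw [div_mul_eq_mul_div, div_le_iff₀ hcd0]
  have hzabs : 0 ≤ ‖z‖ := norm_nonneg z
  nlinarith [abs_nonneg x, abs_nonneg y]

set_option maxHeartbeats 1600000 in
/-- Let `c, d` be linearly independent over `ℝ` and `ad - bc = 0`. If
`A(p,q) → a`, `B(p,q) → b`, `C(p,q) → c`, `D(p,q) → d` as `|p|+|q| → ∞`, then
`(Ap + Bq)/(Cp + Dq) → a/c` as `|p|+|q| → ∞`; in particular `Cp + Dq ≠ 0` for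
all large `|p|+|q|`, and the limit also equals `b/d` when `b, d ≠ 0`. -/
theorem quotient_limit (a b c d : ℂ)
    (hind : ∀ x y : ℝ, (x : ℂ) * c + (y : ℂ) * d = 0 → x = 0 ∧ y = 0)
    (hdet : a * d - b * c = 0)
    (A B C D : ℤ → ℤ → ℂ)
    (hA : ∀ ε : ℝ, 0 < ε → ∃ N : ℕ, ∀ p q : ℤ, (N : ℤ) < |p| + |q| →
      ‖A p q - a‖ < ε)
    (hB : ∀ ε : ℝ, 0 < ε → ∃ N : ℕ, ∀ p q : ℤ, (N : ℤ) < |p| + |q| →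
      ‖B p q - b‖ < ε)
    (hC : ∀ ε : ℝ, 0 < ε → ∃ N : ℕ, ∀ p q : ℤ, (N : ℤ) < |p| + |q| →
      ‖C p q - c‖ < ε)
    (hD : ∀ ε : ℝ, 0 < ε → ∃ N : ℕ, ∀ p q : ℤ, (N : ℤ) < |p| + |q| →
      ‖D p q - d‖ < ε) :
    (∃ N : ℕ, ∀ p q : ℤ, (N : ℤ) < |p| + |q| → C p q * p + D p q * q ≠ 0) ∧
    (∀ ε : ℝ, 0 < ε → ∃ N : ℕ, ∀ p q : ℤ, (N : ℤ) < |p| + |q| →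
      ‖(A p q * p + B p q * q) / (C p q * p + D p q * q) - a / c‖ < ε) ∧
    (b ≠ 0 → d ≠ 0 → a / c = b / d) := by
  obtain ⟨m, hm, hlow⟩ := qlim_lower c d hind
  have hc : c ≠ 0 := by
    intro h; have := (hind 1 0 (by simp [h])).1; norm_num at this
  have hd : d ≠ 0 := by
    intro h; have := (hind 0 1 (by simp [h])).2; norm_num at this
  have hcpos : 0 < ‖c‖ := norm_pos_iff.mpr hc
  have habsZ : ∀ n : ℤ, ‖((n : ℤ) : ℂ)‖ = ((|n| : ℤ) : ℝ) := by
    intro n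
    rw [Int.cast_abs, ← Complex.ofReal_intCast, Complex.norm_real, Real.norm_eq_abs]
  have hlowZ : ∀ p q : ℤ, m * ((|p| + |q| : ℤ) : ℝ) ≤
      ‖(p : ℂ) * c + (q : ℂ) * d‖ := by
    intro p q
    have := hlow (p : ℝ) (q : ℝ)
    push_cast at this ⊢
    convert this using 3 <;> push_cast <;> ring
  -- denominator lower bound
  have hden : ∃ N : ℕ, ∀ p q : ℤ, (N : ℤ) < |p| + |q| →
      m / 2 * ((|p| + |q| : ℤ) : ℝ) ≤ ‖C p q * p + D p q * q‖ := by
    obtain ⟨N1, hN1⟩ := hC (m / 2) (by linarith)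
    obtain ⟨N2, hN2⟩ := hD (m / 2) (by linarith)
    refine ⟨N1 + N2, fun p q hpq => ?_⟩
    have hp1 : (N1 : ℤ) < |p| + |q| := by
      refine lt_of_le_of_lt ?_ hpq; exact_mod_cast Nat.le_add_right N1 N2
    have hp2 : (N2 : ℤ) < |p| + |q| := by
      refine lt_of_le_of_lt ?_ hpq; exact_mod_cast Nat.le_add_left N2 N1
    have h1 := hN1 p q hp1
    have h2 := hN2 p q hp2
    have key := hlowZ p q
    set S : ℝ := ((|p| + |q| : ℤ) : ℝ) with hS
    have hSsplit : S = ((|p| : ℤ) : ℝ) + ((|q| : ℤ) : ℝ) := by rw [hS]; push_cast; ring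
    have happ : (0:ℝ) ≤ ((|p| : ℤ) : ℝ) := by positivity
    have haqq : (0:ℝ) ≤ ((|q| : ℤ) : ℝ) := by positivity
    have hdiff : ‖(C p q - c) * p + (D p q - d) * q‖ ≤ m / 2 * S := by
      calc ‖(C p q - c) * p + (D p q - d) * q‖
          ≤ ‖(C p q - c) * p‖ + ‖(D p q - d) * q‖ :=
            norm_add_le _ _
        _ = ‖C p q - c‖ * ((|p| : ℤ) : ℝ)
            + ‖D p q - d‖ * ((|q| : ℤ) : ℝ) := by
            rw [norm_mul, norm_mul, habsZ, habsZ]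
        _ ≤ m / 2 * ((|p| : ℤ) : ℝ) + m / 2 * ((|q| : ℤ) : ℝ) :=
            add_le_add (mul_le_mul_of_nonneg_right h1.le happ)
              (mul_le_mul_of_nonneg_right h2.le haqq)
        _ = m / 2 * S := by rw [hSsplit]; ring
    have h3 : ‖(p : ℂ) * c + (q : ℂ) * d‖ ≤
        ‖C p q * p + D p q * q‖
        + ‖(C p q - c) * p + (D p q - d) * q‖ := by
      have heq : (p : ℂ) * c + (q : ℂ) * d =
          (C p q * p + D p q * q) + (-((C p q - c) * p + (D p q - d) * q)) := by ring
      rw [heq]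
      refine le_trans (norm_add_le _ _) ?_
      rw [norm_neg]
    linarith
  obtain ⟨Nden, hNden⟩ := hden
  have hSone : ∀ p q : ℤ, (Nden : ℤ) < |p| + |q| → (1 : ℝ) ≤ ((|p| + |q| : ℤ) : ℝ) := by
    intro p q h
    have h0 : (0 : ℤ) ≤ (Nden : ℤ) := Int.ofNat_nonneg _
    have : (1 : ℤ) ≤ |p| + |q| := by linarith
    exact_mod_cast this
  refine ⟨⟨Nden, fun p q hpq hzero => ?_⟩, ?_, ?_⟩
  · have h1 := hNden p q hpq
    have h2 := hSone p q hpq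
    rw [hzero, norm_zero] at h1
    nlinarith
  · intro ε hε
    set δ : ℝ := ε * ‖c‖ * m / (8 * (‖a‖ + ‖c‖ + 1)) with hδdef
    have hδ : 0 < δ := by positivity
    obtain ⟨NA, hNA⟩ := hA δ hδ
    obtain ⟨NB, hNB⟩ := hB δ hδ
    obtain ⟨NC, hNC⟩ := hC δ hδ
    obtain ⟨ND, hND⟩ := hD δ hδ
    refine ⟨NA + NB + NC + ND + Nden, fun p q hpq => ?_⟩
    have hpA : (NA : ℤ) < |p| + |q| := by
      refine lt_of_le_of_lt ?_ hpq
      have : NA ≤ NA + NB + NC + ND + Nden := by omega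
      exact_mod_cast this
    have hpB : (NB : ℤ) < |p| + |q| := by
      refine lt_of_le_of_lt ?_ hpq
      have : NB ≤ NA + NB + NC + ND + Nden := by omega
      exact_mod_cast this
    have hpC : (NC : ℤ) < |p| + |q| := by
      refine lt_of_le_of_lt ?_ hpq
      have : NC ≤ NA + NB + NC + ND + Nden := by omega
      exact_mod_cast this
    have hpD : (ND : ℤ) < |p| + |q| := by
      refine lt_of_le_of_lt ?_ hpq
      have : ND ≤ NA + NB + NC + ND + Nden := by omega
      exact_mod_cast this
    have hpE : (Nden : ℤ) < |p| + |q| := by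
      refine lt_of_le_of_lt ?_ hpq
      have : Nden ≤ NA + NB + NC + ND + Nden := by omega
      exact_mod_cast this
    have hA' := hNA p q hpA
    have hB' := hNB p q hpB
    have hC' := hNC p q hpC
    have hD' := hND p q hpD
    have hz := hNden p q hpE
    have hS1 := hSone p q hpE
    set S : ℝ := ((|p| + |q| : ℤ) : ℝ) with hS
    have hSsplit : S = ((|p| : ℤ) : ℝ) + ((|q| : ℤ) : ℝ) := by rw [hS]; push_cast; ring
    have happ : (0:ℝ) ≤ ((|p| : ℤ) : ℝ) := by positivity
    have haqq : (0:ℝ) ≤ ((|q| : ℤ) : ℝ) := by positivity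
    set z : ℂ := C p q * p + D p q * q with hzdef
    clear_value z
    clear_value S
    clear_value δ
    have hzpos : 0 < ‖z‖ := by nlinarith
    have hzne : z ≠ 0 := by
      intro h; rw [h, norm_zero] at hzpos; exact lt_irrefl _ hzpos
    have hid : (A p q * p + B p q * q) / z - a / c
        = ((A p q * p + B p q * q) * c - a * z) / (z * c) := by
      field_simp
    have hnum : (A p q * p + B p q * q) * c - a * z
        = (A p q - a) * c * p + ((B p q - b) * c) * q
          + (-(a * (C p q - c))) * p + (-(a * (D p q - d))) * q := by
      rw [hzdef]
      linear_combination (-(q : ℂ)) * hdet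
    have e1 : ‖(A p q - a) * c * p‖ ≤ δ * ‖c‖ * ((|p| : ℤ) : ℝ) := by
      rw [norm_mul, norm_mul, habsZ]
      gcongr
    have e2 : ‖((B p q - b) * c) * q‖ ≤ δ * ‖c‖ * ((|q| : ℤ) : ℝ) := by
      rw [norm_mul, norm_mul, habsZ]
      gcongr
    have e3 : ‖(-(a * (C p q - c))) * p‖ ≤ ‖a‖ * δ * ((|p| : ℤ) : ℝ) := by
      rw [norm_mul, norm_neg, norm_mul, habsZ]
      gcongr
    have e4 : ‖(-(a * (D p q - d))) * q‖ ≤ ‖a‖ * δ * ((|q| : ℤ) : ℝ) := by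
      rw [norm_mul, norm_neg, norm_mul, habsZ]
      gcongr
    have hnumb : ‖(A p q * p + B p q * q) * c - a * z‖
        ≤ δ * (‖a‖ + ‖c‖) * S := by
      rw [hnum]
      calc ‖(A p q - a) * c * p + ((B p q - b) * c) * q
            + (-(a * (C p q - c))) * p + (-(a * (D p q - d))) * q‖
          ≤ ‖(A p q - a) * c * p‖ + ‖((B p q - b) * c) * q‖
            + ‖(-(a * (C p q - c))) * p‖
            + ‖(-(a * (D p q - d))) * q‖ := by
            refine le_trans (norm_add_le _ _) ?_
            gcongr
            refine le_trans (norm_add_le _ _) ?_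
            gcongr
            exact norm_add_le _ _
        _ ≤ δ * (‖a‖ + ‖c‖) * S := by
            rw [hSsplit]
            nlinarith [norm_nonneg a]
    rw [hid, norm_div, norm_mul]
    rw [div_lt_iff₀ (by positivity)]
    have hanonneg : (0:ℝ) ≤ ‖a‖ := norm_nonneg a
    have hstep : δ * (‖a‖ + ‖c‖) * S < ε * (m / 2) * ‖c‖ * S := by
      have hkey : δ * (‖a‖ + ‖c‖) < ε * (m / 2) * ‖c‖ := by
        rw [hδdef]
        rw [div_mul_eq_mul_div, div_lt_iff₀ (by positivity)]
        nlinarith [mul_pos (mul_pos hε hcpos) hm,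
          mul_nonneg (mul_nonneg (mul_pos hε hcpos).le hm.le)
            (by positivity : (0:ℝ) ≤ ‖a‖ + ‖c‖)]
      exact mul_lt_mul_of_pos_right hkey (by linarith)
    calc ‖(A p q * p + B p q * q) * c - a * z‖
        ≤ δ * (‖a‖ + ‖c‖) * S := hnumb
      _ < ε * (m / 2) * ‖c‖ * S := hstep
      _ ≤ ε * (‖z‖ * ‖c‖) := by
          have h5 := mul_le_mul_of_nonneg_left hz (mul_nonneg hε.le hcpos.le)
          nlinarith
  · intro hb hd0
    rw [div_eq_div_iff hc hd]
    linear_combination hdet
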